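/- Let U be an open subset of ℝⁿ, k ≥ 1 an integer, H : ℝⁿ → ℝ a nonzero affine-linear function, and f : U → ℝ a C^k function vanishing identically on H⁻¹(0) ∩ U. Then the quotient f/H : U \ H⁻¹(0) → ℝ extends to a C^(k-1) function on U. -/

import Mathlib

open MeasureTheory Metric Set Function

set_option synthInstance.maxHeartbeats 1000000 in
private lemma param_int {n : ℕ} (m : ℕ) :
    ∀ {G : Type} [NormedAddCommGroup G] [NormedSpace ℝ G] [CompleteSpace G]
      (F : (Fin n → ℝ) → ℝ → G), ContDiff ℝ (m : WithTop ℕ∞) (Function.uncurry F) →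
      ContDiff ℝ (m : WithTop ℕ∞) (fun x => ∫ t in (0:ℝ)..1, F x t) := by
  induction m with
  | zero =>
    intro G _ _ _ F hF
    rw [show ((0:ℕ) : WithTop ℕ∞) = 0 from rfl, contDiff_zero] at *
    exact intervalIntegral.continuous_parametric_intervalIntegral_of_continuous' hF 0 1
  | succ m ih =>
    intro G _ _ _ F hF
    set F' : (Fin n → ℝ) → ℝ → ((Fin n → ℝ) →L[ℝ] G) :=
      fun x t => (fderiv ℝ (uncurry F) (x, t)).comp (ContinuousLinearMap.inl ℝ _ ℝ) with hF'def
    have hcast : ((m : WithTop ℕ∞)) + 1 ≤ ((m + 1 : ℕ) : WithTop ℕ∞) := by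
      push_cast; rfl
    have hDF : ContDiff ℝ (m : WithTop ℕ∞) (fderiv ℝ (uncurry F)) := hF.fderiv_right hcast
    have hF' : ContDiff ℝ (m : WithTop ℕ∞) (uncurry F') := by
      exact hDF.clm_comp contDiff_const
    have h1 : (1 : WithTop ℕ∞) ≤ ((m + 1 : ℕ) : WithTop ℕ∞) := by
      exact_mod_cast Nat.one_le_cast.mpr (Nat.succ_le_succ (Nat.zero_le m))
    have hFdiff : Differentiable ℝ (uncurry F) := hF.differentiable (zero_lt_one.trans_le h1).ne'
    have hFcont : Continuous (uncurry F) := hF.continuous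
    have hF'cont : Continuous (uncurry F') := hF'.continuous
    have key : ∀ x₀ : Fin n → ℝ, HasFDerivAt (fun x => ∫ t in (0:ℝ)..1, F x t)
        (∫ t in (0:ℝ)..1, F' x₀ t) x₀ := by
      intro x₀
      obtain ⟨C, hC⟩ := ((isCompact_closedBall x₀ 1).prod isCompact_Icc).exists_bound_of_continuousOn
        hF'cont.continuousOn
      apply intervalIntegral.hasFDerivAt_integral_of_dominated_of_fderiv_le
        (s := ball x₀ 1) (ball_mem_nhds x₀ one_pos)
        (Filter.Eventually.of_forall fun x =>
          (hFcont.comp (Continuous.prodMk_right x)).aestronglyMeasurable)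
        ((hFcont.comp (Continuous.prodMk_right x₀)).intervalIntegrable 0 1)
        (hF'cont.comp (Continuous.prodMk_right x₀)).aestronglyMeasurable
        (bound := fun _ => C)
      · filter_upwards with t ht x hx
        rw [Set.uIoc_of_le (zero_le_one (α := ℝ))] at ht
        exact hC (x, t) ⟨ball_subset_closedBall hx, Set.Ioc_subset_Icc_self ht⟩
      · exact intervalIntegrable_const
      · filter_upwards with t ht x hx
        have h2 : HasFDerivAt (fun y : Fin n → ℝ => (y, t))
            (ContinuousLinearMap.inl ℝ (Fin n → ℝ) ℝ) x := hasFDerivAt_prodMk_left x t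
        exact ((hFdiff (x, t)).hasFDerivAt).comp x h2
    have hdiff : Differentiable ℝ (fun x => ∫ t in (0:ℝ)..1, F x t) := fun x => (key x).differentiableAt
    have hfd : (fderiv ℝ fun x => ∫ t in (0:ℝ)..1, F x t) = fun x₀ => ∫ t in (0:ℝ)..1, F' x₀ t := by
      funext x₀; exact (key x₀).fderiv
    rw [show ((m + 1 : ℕ) : WithTop ℕ∞) = (m : WithTop ℕ∞) + 1 by push_cast; rfl,
      contDiff_succ_iff_fderiv]
    refine ⟨hdiff, by simp, ?_⟩
    rw [hfd]
    exact ih F' hF'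


private lemma hadamard_global {n : ℕ} (k : ℕ) (hk : 1 ≤ k)
    (a e : Fin n → ℝ) (b : ℝ) (he : ∑ i, a i * e i = 1)
    (f : (Fin n → ℝ) → ℝ) (hf : ContDiff ℝ (k : WithTop ℕ∞) f)
    (hv : ∀ x, (∑ i, a i * x i) + b = 0 → f x = 0) :
    ∃ g : (Fin n → ℝ) → ℝ, ContDiff ℝ ((k - 1 : ℕ) : WithTop ℕ∞) g ∧
      (∀ x, (∑ i, a i * x i) + b ≠ 0 → g x = f x / ((∑ i, a i * x i) + b)) ∧
      (∀ x, (∑ i, a i * x i) + b = 0 → g x = fderiv ℝ f x e) := by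
  set H : (Fin n → ℝ) → ℝ := fun x => (∑ i, a i * x i) + b with hHdef
  have hHsm : ∀ m : WithTop ℕ∞, ContDiff ℝ m H := by
    intro m
    apply ContDiff.add _ contDiff_const
    exact ContDiff.sum fun i _ => contDiff_const.mul (contDiff_apply ℝ ℝ i)
  have hHlin : ∀ (x : Fin n → ℝ) (c : ℝ), H (x - c • e) = H x - c := by
    intro x c
    simp only [hHdef, Pi.sub_apply, Pi.smul_apply, smul_eq_mul, mul_sub]
    rw [Finset.sum_sub_distrib]
    have : ∑ i, a i * (c * e i) = c * ∑ i, a i * e i := by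
      rw [Finset.mul_sum]; congr 1; funext i; ring
    rw [this, he]; ring
  set c : (Fin n → ℝ) × ℝ → Fin n → ℝ := fun p => p.1 - ((1 - p.2) * H p.1) • e with hcdef
  have hc : ContDiff ℝ ((k - 1 : ℕ) : WithTop ℕ∞) c := by
    apply ContDiff.sub contDiff_fst
    exact ((contDiff_const.sub contDiff_snd).mul ((hHsm _).comp contDiff_fst)).smul contDiff_const
  have hcast : (((k - 1 : ℕ)) : WithTop ℕ∞) + 1 ≤ (k : WithTop ℕ∞) := by
    have : (k - 1) + 1 = k := Nat.succ_pred_eq_of_pos hk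
    rw [← this]; push_cast; rfl
  have hDf : ContDiff ℝ ((k - 1 : ℕ) : WithTop ℕ∞) (fderiv ℝ f) := hf.fderiv_right hcast
  have h1k : (1 : WithTop ℕ∞) ≤ (k : WithTop ℕ∞) := by exact_mod_cast Nat.one_le_cast.mpr hk
  have hfdiff : Differentiable ℝ f := hf.differentiable (zero_lt_one.trans_le h1k).ne'
  set F : (Fin n → ℝ) → ℝ → ℝ := fun x t => fderiv ℝ f (c (x, t)) e with hFdef
  have hF : ContDiff ℝ ((k - 1 : ℕ) : WithTop ℕ∞) (uncurry F) := by
    exact (hDf.comp hc).clm_apply contDiff_const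
  refine ⟨fun x => ∫ t in (0:ℝ)..1, F x t, param_int (k - 1) F hF, ?_, ?_⟩
  · -- key identity : f x = H x * g x
    have key : ∀ x, f x = H x * ∫ t in (0:ℝ)..1, F x t := by
      intro x
      have hcont : Continuous fun t => F x t :=
        hF.continuous.comp (Continuous.prodMk_right x)
      have hderiv : ∀ t ∈ Set.uIcc (0:ℝ) 1,
          HasDerivAt (fun t => f (c (x, t))) (H x * F x t) t := by
        intro t _
        have h1 : HasDerivAt (fun t : ℝ => 1 - t) (-1) t := by
          simpa using (hasDerivAt_id t).const_sub 1
        have h2 : HasDerivAt (fun t : ℝ => (1 - t) * H x) (-1 * H x) t := h1.mul_const _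
        have h3 : HasDerivAt (fun t : ℝ => ((1 - t) * H x) • e) ((-1 * H x) • e) t :=
          h2.smul_const e
        have h4 : HasDerivAt (fun t : ℝ => c (x, t)) ((H x) • e) t := by
          have := (hasDerivAt_const t x).sub h3
          rw [neg_one_mul, neg_smul, zero_sub, neg_neg] at this
          exact this
        have h5 : HasDerivAt (fun t => f (c (x, t)))
            (fderiv ℝ f (c (x, t)) ((H x) • e)) t :=
          (hfdiff (c (x, t))).hasFDerivAt.comp_hasDerivAt t h4
        simpa [hFdef, smul_eq_mul] using h5
      have hint := intervalIntegral.integral_eq_sub_of_hasDerivAt hderiv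
        ((continuous_const.mul hcont).intervalIntegrable 0 1)
      have hc1 : c (x, 1) = x := by simp [hcdef]
      have hc0 : f (c (x, 0)) = 0 := by
        apply hv
        have : c (x, 0) = x - (H x) • e := by simp [hcdef]
        rw [show (∑ i, a i * c (x,0) i) + b = H (c (x,0)) from rfl, this, hHlin, sub_self]
      rw [intervalIntegral.integral_const_mul, hc1, hc0, sub_zero] at hint
      exact hint.symm
    intro x hx
    rw [show (∑ i, a i * x i) + b = H x from rfl] at hx ⊢
    rw [key x, mul_div_cancel_left₀ _ hx]
  · intro x hx
    rw [show (∑ i, a i * x i) + b = H x from rfl] at hx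
    have : ∀ t : ℝ, F x t = fderiv ℝ f x e := by
      intro t
      have : c (x, t) = x := by simp [hcdef, hx]
      rw [hFdef]; simp only [this]
    simp only [this]
    simp

theorem affine_division {n : ℕ} (U : Set (Fin n → ℝ)) (hU : IsOpen U)
    (k : ℕ) (hk : 1 ≤ k)
    (a : Fin n → ℝ) (b : ℝ) (hab : a ≠ 0 ∨ b ≠ 0)
    (H : (Fin n → ℝ) → ℝ) (hH : ∀ x, H x = (∑ i, a i * x i) + b)
    (f : (Fin n → ℝ) → ℝ) (hf : ContDiffOn ℝ k f U)
    (hvanish : ∀ x ∈ U, H x = 0 → f x = 0) :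
    ∃ g : (Fin n → ℝ) → ℝ, ContDiffOn ℝ (k - 1 : ℕ) g U ∧
      ∀ x ∈ U, H x ≠ 0 → g x = f x / H x := by
  obtain rfl : H = fun x => (∑ i, a i * x i) + b := funext hH
  simp only at hvanish ⊢
  by_cases ha : a = 0
  · have hb : b ≠ 0 := hab.resolve_left (fun h => h ha)
    refine ⟨fun x => f x / b, ?_, ?_⟩
    · exact (hf.of_le (by exact_mod_cast Nat.cast_le.mpr (Nat.sub_le k 1))).div_const b
    · intro x hx hne
      simp [ha]
  · have hs : 0 < ∑ i, a i * a i := by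
      obtain ⟨i, hi⟩ := Function.ne_iff.mp ha
      exact Finset.sum_pos' (fun j _ => mul_self_nonneg _)
        ⟨i, Finset.mem_univ i, mul_self_pos.mpr hi⟩
    set e : Fin n → ℝ := (∑ i, a i * a i)⁻¹ • a with hedef
    have he : ∑ i, a i * e i = 1 := by
      have : ∀ i, a i * e i = (∑ j, a j * a j)⁻¹ * (a i * a i) := by
        intro i; simp [hedef]; ring
      rw [Finset.sum_congr rfl fun i _ => this i, ← Finset.mul_sum,
        inv_mul_cancel₀ hs.ne']
    set g : (Fin n → ℝ) → ℝ := fun x =>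
      if (∑ i, a i * x i) + b = 0 then fderiv ℝ f x e else f x / ((∑ i, a i * x i) + b)
      with hgdef
    have hgoal : ∀ x₀ ∈ U, ContDiffAt ℝ ((k - 1 : ℕ) : WithTop ℕ∞) g x₀ := by
      intro x₀ hx₀
      obtain ⟨r, hr, hball⟩ := Metric.isOpen_iff.mp hU x₀ hx₀
      set χ : ContDiffBump x₀ := ⟨r/4, r/2, by positivity, by linarith⟩ with hχdef
      have hsupp : tsupport ↑χ ⊆ U := by
        rw [χ.tsupport_eq]
        exact (closedBall_subset_ball (by simp [hχdef]; linarith)).trans hball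
      set f' : (Fin n → ℝ) → ℝ := fun x => χ x * f x with hf'def
      have hf' : ContDiff ℝ (k : WithTop ℕ∞) f' := by
        rw [contDiff_iff_contDiffAt]
        intro y
        by_cases hy : y ∈ U
        · exact (χ.contDiff (n := k)).contDiffAt.mul (hf.contDiffAt (hU.mem_nhds hy))
        · have hz : (↑χ : (Fin n → ℝ) → ℝ) =ᶠ[nhds y] 0 :=
            notMem_tsupport_iff_eventuallyEq.mp (fun h => hy (hsupp h))
          exact contDiffAt_const (c := (0:ℝ)) |>.congr_of_eventuallyEq
            (hz.mono fun z hz => by simp [hf'def, hz])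
      have hv' : ∀ x, (∑ i, a i * x i) + b = 0 → f' x = 0 := by
        intro x hx
        by_cases hxU : x ∈ U
        · simp [hf'def, hvanish x hxU hx]
        · have : χ x = 0 := image_eq_zero_of_notMem_tsupport (fun h => hxU (hsupp h))
          simp [hf'def, this]
      obtain ⟨g', hg's, hg'1, hg'0⟩ := hadamard_global k hk a e b he f' hf' hv'
      have heq : g =ᶠ[nhds x₀] g' := by
        have hball2 : Metric.ball x₀ (r/4) ∈ nhds x₀ := ball_mem_nhds _ (by positivity)
        filter_upwards [hball2] with y hy
        have hfy : f' =ᶠ[nhds y] f := by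
          filter_upwards [isOpen_ball.mem_nhds hy] with z hz
          have : χ z = 1 := χ.one_of_mem_closedBall (ball_subset_closedBall hz)
          simp [hf'def, this]
        by_cases hy0 : (∑ i, a i * y i) + b = 0
        · rw [show g y = fderiv ℝ f y e from if_pos hy0, hg'0 y hy0, hfy.fderiv_eq]
        · rw [show g y = f y / ((∑ i, a i * y i) + b) from if_neg hy0, hg'1 y hy0,
            hfy.self_of_nhds]
      exact hg's.contDiffAt.congr_of_eventuallyEq heq
    refine ⟨g, fun x hx => (hgoal x hx).contDiffWithinAt, ?_⟩
    intro x hx hne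
    exact if_neg hne
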